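/- Let $R>0$, $x_0 \in \mathbb{R}^n$ ($n \geq 2$) with $0 < |x_0| < R$, $\beta>0$, $\alpha^2 = R^2 - |x_0|^2$, and $\varphi(x) = (|x-x_0|^2+\alpha^2)^{-\beta R}$. Then for all $x \in \mathbb{R}^n$, $-\Delta \varphi(x) = f(\varphi(x))$, where $f(t) = 2\beta R\, t\,[(n - 2(\beta R + 1))\, t^{1/(\beta R)} + 2(\beta R + 1)\alpha^2\, t^{2/(\beta R)}]$. -/

import Mathlib

open Real

/-- The Euclidean Laplacian, as the sum of the second partial derivatives. -/
noncomputable def lap {n : ℕ} (f : EuclideanSpace ℝ (Fin n) → ℝ)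
    (x : EuclideanSpace ℝ (Fin n)) : ℝ :=
  ∑ i : Fin n, fderiv ℝ (fun y => fderiv ℝ f y (EuclideanSpace.single i 1)) x
    (EuclideanSpace.single i 1)

theorem stmt_1 {n : ℕ} (hn : 2 ≤ n) (R β : ℝ) (hR : 0 < R) (hβ : 0 < β)
    (x₀ : EuclideanSpace ℝ (Fin n)) (hx₀ : 0 < ‖x₀‖) (hx₀R : ‖x₀‖ < R)
    (α2 : ℝ) (hα2 : α2 = R ^ 2 - ‖x₀‖ ^ 2)
    (φ : EuclideanSpace ℝ (Fin n) → ℝ)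
    (hφ : ∀ x, φ x = (‖x - x₀‖ ^ 2 + α2) ^ (-(β * R)))
    (f : ℝ → ℝ)
    (hf : ∀ t : ℝ, f t = 2 * β * R * t *
      (((n : ℝ) - 2 * (β * R + 1)) * t ^ (1 / (β * R)) +
        2 * (β * R + 1) * α2 * t ^ (2 / (β * R)))) :
    ∀ x : EuclideanSpace ℝ (Fin n), -lap φ x = f (φ x) := by
  intro x
  have hβR : 0 < β * R := mul_pos hβ hR
  have hα : 0 < α2 := by
    rw [hα2]
    nlinarith
  set c : ℝ := -(β * R) with hc
  set G : EuclideanSpace ℝ (Fin n) → ℝ := fun y => ‖y - x₀‖ ^ 2 + α2 with hG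
  have hGpos : ∀ y, 0 < G y := fun y => by positivity
  have hG' : ∀ y, HasFDerivAt G (2 • (innerSL ℝ (y - x₀))) y := fun y => by
    refine ((((hasFDerivAt_id y).sub_const x₀).norm_sq).add_const α2).congr_fderiv ?_
    ext v; simp
  have hφG : φ = fun y => G y ^ c := funext fun y => hφ y
  have hφ' : ∀ y, HasFDerivAt φ ((c * G y ^ (c - 1)) • (2 • innerSL ℝ (y - x₀))) y :=
    fun y => by
      rw [hφG]
      exact (hG' y).rpow_const (Or.inl (hGpos y).ne')
  have hdφ : ∀ (y) (i : Fin n), fderiv ℝ φ y (EuclideanSpace.single i 1)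
      = 2 * c * (G y ^ (c - 1) * (y i - x₀ i)) := by
    intro y i
    rw [(hφ' y).fderiv]
    simp [EuclideanSpace.inner_single_right, PiLp.sub_apply]
    ring
  have hsec : ∀ i : Fin n,
      fderiv ℝ (fun y => fderiv ℝ φ y (EuclideanSpace.single i 1)) x (EuclideanSpace.single i 1)
      = 2 * c * G x ^ (c - 1) + 4 * c * (c - 1) * G x ^ (c - 2) * (x i - x₀ i) ^ 2 := by
    intro i
    have hfun : (fun y => fderiv ℝ φ y (EuclideanSpace.single i 1))
        = fun y => 2 * c * (G y ^ (c - 1) * (y i - x₀ i)) := funext fun y => hdφ y i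
    rw [hfun]
    have hu : HasFDerivAt (fun y : EuclideanSpace ℝ (Fin n) => G y ^ (c - 1))
        (((c - 1) * G x ^ (c - 1 - 1)) • (2 • innerSL ℝ (x - x₀))) x :=
      (hG' x).rpow_const (Or.inl (hGpos x).ne')
    have hv : HasFDerivAt (fun y : EuclideanSpace ℝ (Fin n) => y i - x₀ i)
        (EuclideanSpace.proj (𝕜 := ℝ) i) x := by
      simpa using (EuclideanSpace.proj (𝕜 := ℝ) i).hasFDerivAt.sub_const (x₀ i)
    rw [HasFDerivAt.fderiv (f := fun y : EuclideanSpace ℝ (Fin n) => 2 * c * (G y ^ (c - 1) * (y i - x₀ i))) ((hu.mul hv).const_mul (2 * c))]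
    simp [EuclideanSpace.inner_single_right, PiLp.sub_apply, EuclideanSpace.single_apply]
    have : c - 1 - 1 = c - 2 := by ring
    rw [this]
    ring
  have hnormsq : ∑ i : Fin n, (x i - x₀ i) ^ 2 = ‖x - x₀‖ ^ 2 := by
    rw [PiLp.norm_sq_eq_of_L2]
    simp [PiLp.sub_apply, Real.norm_eq_abs, sq_abs]
  have hlap : lap φ x = (n : ℝ) * (2 * c * G x ^ (c - 1))
      + 4 * c * (c - 1) * G x ^ (c - 2) * ‖x - x₀‖ ^ 2 := by
    unfold lap
    simp_rw [hsec]
    rw [Finset.sum_add_distrib, Finset.sum_const, ← Finset.mul_sum, hnormsq,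
      Finset.card_univ, Fintype.card_fin, nsmul_eq_mul]
  have hGx := hGpos x
  have hne : G x ≠ 0 := hGx.ne'
  have hφx : φ x = G x ^ c := hφ x
  have h1 : (G x ^ c) ^ (1 / (β * R)) = (G x)⁻¹ := by
    rw [← Real.rpow_mul hGx.le]
    have : c * (1 / (β * R)) = -1 := by
      rw [hc]; field_simp
    rw [this, Real.rpow_neg_one]
  have h2 : (G x ^ c) ^ (2 / (β * R)) = (G x ^ 2)⁻¹ := by
    rw [← Real.rpow_mul hGx.le]
    have : c * (2 / (β * R)) = -2 := by
      rw [hc]; field_simp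
    rw [this, show (-2 : ℝ) = -(2:ℕ) by norm_num, Real.rpow_neg hGx.le, Real.rpow_natCast]
  have h3 : G x ^ (c - 1) = G x ^ (c - 2) * G x := by
    rw [show c - 1 = (c - 2) + 1 by ring, Real.rpow_add hGx, Real.rpow_one]
  have h4 : G x ^ c = G x ^ (c - 2) * G x ^ 2 := by
    rw [show (G x ^ 2 : ℝ) = G x ^ (2:ℝ) by rw [← Real.rpow_natCast (G x) 2]; norm_num,
      ← Real.rpow_add hGx]
    norm_num
  have h5 : ‖x - x₀‖ ^ 2 = G x - α2 := by
    rw [hG]; ring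
  rw [hlap, hf, hφx, h1, h2, h3, h4, h5, hc]
  have hc2 : G x ^ (c - 2) = G x ^ (-(β * R) - 2) := by rw [hc]
  rw [hc2]
  field_simp
  ring
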